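/- Let n ≥ 4 be an integer, x ≥ 0 a real number, and a_0(n), a_1(n) real sequences. Then V_{n,1}(e_2; x) = (2a_0(n) − a_1(n))x² + (1/((n−2)(n−3)))·[a_0(n)(8+10x−8x²) + a_1(n)(−6−10x+2x²) + n{a_0(n)(10x+16x²) − a_1(n)(6x+10x²)}], where e_2(t) = t² (in particular the defining series and integrals converge absolutely). -/

import Mathlib

open MeasureTheory Filter Topology

/-- Baskakov basis function `p_{n,k}(x) = C(n+k-1, k) x^k / (1+x)^{n+k}`. -/
noncomputable def bask (n k : ℕ) (x : ℝ) : ℝ :=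
  (Nat.choose (n + k - 1) k : ℝ) * x ^ k / (1 + x) ^ (n + k)

/-- Modified basis `p^1_{n,k}(x) = a(x,n) p_{n+1,k}(x) + b(x,n) p_{n+1,k-1}(x)`,
with `p_{n+1,-1} = 0`. -/
noncomputable def p1 (a0 a1 : ℕ → ℝ) (n k : ℕ) (x : ℝ) : ℝ :=
  (a0 n + a1 n * x) * bask (n + 1) k x
    + (a0 n - a1 n * (1 + x)) * (if k = 0 then 0 else bask (n + 1) (k - 1) x)

/-- First-order modified Baskakov–Durrmeyer operator. -/
noncomputable def V1 (a0 a1 : ℕ → ℝ) (n : ℕ) (f : ℝ → ℝ) (x : ℝ) : ℝ :=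
  ((n : ℝ) - 1) * ∑' k : ℕ, p1 a0 a1 n k x * ∫ t in Set.Ioi (0 : ℝ), bask n k t * f t

section Aux
open Set

lemma contJ (a b : ℕ) : ContinuousOn (fun t : ℝ => t ^ a / (1 + t) ^ b) (Set.Ici 0) := by
  apply ContinuousOn.div (by fun_prop) (by fun_prop)
  intro t ht
  have h : (0:ℝ) ≤ t := ht
  have : (0:ℝ) < 1 + t := by linarith
  positivity

lemma intOnJ (a b : ℕ) (hb : a + 2 ≤ b) :
    IntegrableOn (fun t : ℝ => t ^ a / (1 + t) ^ b) (Set.Ioi 0) := by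
  have hIoc : IntegrableOn (fun t : ℝ => t ^ a / (1 + t) ^ b) (Set.Ioc 0 1) :=
    (((contJ a b).mono Icc_subset_Ici_self).integrableOn_compact isCompact_Icc).mono_set
      Ioc_subset_Icc_self
  have hIoi : IntegrableOn (fun t : ℝ => t ^ a / (1 + t) ^ b) (Set.Ioi 1) := by
    have hint : IntegrableOn (fun t : ℝ => t ^ (-2 : ℝ)) (Set.Ioi 1) :=
      integrableOn_Ioi_rpow_of_lt (by norm_num) one_pos
    apply Integrable.mono hint
      (((contJ a b).mono (fun t (ht : (1:ℝ) < t) => le_of_lt (lt_of_lt_of_le (one_pos (α := ℝ)) (le_of_lt ht)))).aestronglyMeasurable measurableSet_Ioi)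
    filter_upwards [ae_restrict_mem measurableSet_Ioi] with t ht
    have h1 : (1:ℝ) < t := ht
    have h1t : (0:ℝ) < 1 + t := by linarith
    have key : t ^ a * t ^ 2 ≤ (1 + t) ^ b := by
      calc t ^ a * t ^ 2 = t ^ (a + 2) := by ring
        _ ≤ (1 + t) ^ (a + 2) := pow_le_pow_left₀ (by linarith) (by linarith) _
        _ ≤ (1 + t) ^ b := pow_le_pow_right₀ (by linarith) hb
    rw [Real.norm_eq_abs, Real.norm_eq_abs, abs_of_nonneg (by positivity),
      abs_of_nonneg (by positivity), Real.rpow_neg (by linarith), Real.rpow_two,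
      inv_eq_one_div, div_le_div_iff₀ (by positivity) (by positivity)]
    linarith [key]
  rw [← Set.Ioc_union_Ioi_eq_Ioi (zero_le_one (α := ℝ))]
  exact hIoc.union hIoi



lemma Jval (a : ℕ) : ∀ b : ℕ, a + 2 ≤ b →
    ∫ t in Set.Ioi (0:ℝ), t ^ a / (1 + t) ^ b
      = (a.factorial : ℝ) * ((b - a - 2).factorial) / ((b - 1).factorial) := by
  induction a with
  | zero =>
    intro b hb
    obtain ⟨m, rfl⟩ : ∃ m, b = m + 2 := ⟨b - 2, by omega⟩
    have hD : ∀ t ∈ Set.Ici (0:ℝ), HasDerivAt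
        (fun t : ℝ => -(((1 + t) ^ (m + 1))⁻¹) / (m + 1))
        (t ^ 0 / (1 + t) ^ (m + 2)) t := by
      intro t ht
      have h0 : (0:ℝ) ≤ t := ht
      have h1t : (0:ℝ) < 1 + t := by linarith
      have h1 : HasDerivAt (fun t : ℝ => 1 + t) 1 t := by
        simpa using (hasDerivAt_id t).const_add 1
      have h2 : HasDerivAt (fun t : ℝ => (1 + t) ^ (m + 1))
          ((m + 1 : ℕ) * (1 + t) ^ m * 1) t := by
        simpa using h1.fun_pow (m + 1)
      have h3 := (h2.fun_inv (by positivity)).neg.div_const ((m : ℝ) + 1)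
      refine h3.congr_deriv (Eq.symm ?_)
      have e1 : ((1 + t) ^ (m+1)) ^ 2 = (1 + t)^(m+2) * (1+t)^m := by ring
      field_simp
      rw [e1]
      push_cast
      ring
    have hT : Tendsto (fun t : ℝ => -(((1 + t) ^ (m + 1))⁻¹) / (m + 1)) atTop (𝓝 0) := by
      have : Tendsto (fun t : ℝ => (1 + t) ^ (m + 1)) atTop atTop :=
        (tendsto_pow_atTop (Nat.succ_ne_zero m)).comp (tendsto_atTop_add_const_left _ 1 tendsto_id)
      have := (this.inv_tendsto_atTop).neg.div_const ((m : ℝ) + 1)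
      simpa using this
    have := integral_Ioi_of_hasDerivAt_of_tendsto' hD (intOnJ 0 (m+2) (by omega)) hT
    rw [this]
    simp [Nat.factorial_succ]
    field_simp
  | succ a IH =>
    intro b hb
    obtain ⟨m, rfl⟩ : ∃ m, b = a + m + 3 := ⟨b - a - 3, by omega⟩
    set b := a + m + 3 with hbdef
    have h1b : b - 1 = a + m + 2 := by omega
    have hD : ∀ t ∈ Set.Ici (0:ℝ), HasDerivAt
        (fun t : ℝ => t ^ (a+1) * ((1 + t) ^ (a + m + 2))⁻¹)
        (((a:ℝ)+1) * (t ^ a / (1 + t) ^ b) - ((m:ℝ)+1) * (t ^ (a+1) / (1 + t) ^ b)) t := by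
      intro t ht
      have h0 : (0:ℝ) ≤ t := ht
      have h1t : (0:ℝ) < 1 + t := by linarith
      have h1 : HasDerivAt (fun t : ℝ => 1 + t) 1 t := by
        simpa using (hasDerivAt_id t).const_add 1
      have h2 : HasDerivAt (fun t : ℝ => (1 + t) ^ (a + m + 2))
          ((a + m + 2 : ℕ) * (1 + t) ^ (a + m + 1) * 1) t := by
        simpa [show a + m + 2 - 1 = a + m + 1 by omega] using h1.fun_pow (a + m + 2)
      have h3 := (hasDerivAt_pow (a+1) t).fun_mul (h2.fun_inv (by positivity))
      refine h3.congr_deriv (Eq.symm ?_)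
      have e1 : ((1 + t) ^ (a+m+2)) ^ 2 = (1 + t)^(a+m+3) * (1+t)^(a+m+1) := by ring
      field_simp
      rw [e1, hbdef]
      push_cast
      ring
    have hT : Tendsto (fun t : ℝ => t ^ (a+1) * ((1 + t) ^ (a + m + 2))⁻¹) atTop (𝓝 0) := by
      apply squeeze_zero' (g := fun t : ℝ => (1 + t)⁻¹)
      · filter_upwards [eventually_ge_atTop (0:ℝ)] with t ht
        have h1t : (0:ℝ) < 1 + t := by linarith
        positivity
      · filter_upwards [eventually_ge_atTop (0:ℝ)] with t ht
        have h1t : (0:ℝ) < 1 + t := by linarith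
        calc t ^ (a+1) * ((1 + t) ^ (a+m+2))⁻¹
            ≤ (1+t) ^ (a+1) * ((1 + t) ^ (a+m+2))⁻¹ := by
              gcongr
              linarith
          _ = ((1+t) ^ (m+1))⁻¹ := by
              rw [show a+m+2 = (a+1)+(m+1) by omega, pow_add]
              field_simp
              ring
          _ ≤ (1+t)⁻¹ := by
              apply inv_anti₀ h1t
              exact le_self_pow₀ (by linarith) (by omega)
      · have hinf : Tendsto (fun t : ℝ => 1 + t) atTop atTop :=
          tendsto_atTop_add_const_left _ 1 tendsto_id
        exact hinf.inv_tendsto_atTop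
    have hint : IntegrableOn (fun t : ℝ =>
        ((a:ℝ)+1) * (t ^ a / (1 + t) ^ b) - ((m:ℝ)+1) * (t ^ (a+1) / (1 + t) ^ b)) (Set.Ioi 0) :=
      ((intOnJ a b (by omega)).const_mul _).sub ((intOnJ (a+1) b (by omega)).const_mul _)
    have hkey := integral_Ioi_of_hasDerivAt_of_tendsto' hD hint hT
    rw [integral_sub ((intOnJ a b (by omega)).const_mul _) ((intOnJ (a+1) b (by omega)).const_mul _),
      integral_const_mul, integral_const_mul, IH b (by omega)] at hkey
    norm_num at hkey
    have hsolve : ∫ t in Set.Ioi (0:ℝ), t ^ (a+1) / (1 + t) ^ b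
        = ((a:ℝ)+1) / ((m:ℝ)+1) * ((a.factorial : ℝ) * ((b - a - 2).factorial) / ((b - 1).factorial)) := by
      have hm1 : ((m:ℝ)+1) ≠ 0 := by positivity
      field_simp at hkey ⊢
      linarith
    rw [hsolve]
    have e2 : b - a - 2 = m + 1 := by omega
    have e3 : b - (a+1) - 2 = m := by omega
    rw [e2, e3]
    push_cast [Nat.factorial_succ]
    have hm1 : ((m:ℝ)+1) ≠ 0 := by positivity
    field_simp




lemma choose_real {N K : ℕ} (h : K ≤ N) :
    (N.choose K : ℝ) = (N.factorial : ℝ) / (K.factorial * (N - K).factorial) := by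
  rw [eq_div_iff (by positivity)]
  rw [← mul_assoc]
  exact_mod_cast Nat.choose_mul_factorial_mul_factorial h

lemma bask_sq_eq (n k : ℕ) (t : ℝ) :
    bask n k t * t ^ 2 = (Nat.choose (n + k - 1) k : ℝ) * (t ^ (k + 2) / (1 + t) ^ (n + k)) := by
  unfold bask
  ring

lemma integrable_bask_sq (n k : ℕ) (hn : 4 ≤ n) :
    IntegrableOn (fun t : ℝ => bask n k t * t ^ 2) (Set.Ioi 0) := by
  have := (intOnJ (k + 2) (n + k) (by omega)).const_mul (Nat.choose (n + k - 1) k : ℝ)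
  apply this.congr
  exact Eventually.of_forall fun t => (bask_sq_eq n k t).symm

lemma integral_bask_sq (n k : ℕ) (hn : 4 ≤ n) :
    ∫ t in Set.Ioi (0:ℝ), bask n k t * t ^ 2
      = ((k:ℝ) + 1) * ((k:ℝ) + 2) / (((n:ℝ) - 1) * (((n:ℝ) - 2) * ((n:ℝ) - 3))) := by
  have e0 : ∀ t : ℝ, bask n k t * t ^ 2
      = (Nat.choose (n + k - 1) k : ℝ) * (t ^ (k + 2) / (1 + t) ^ (n + k)) := bask_sq_eq n k
  rw [integral_congr_ae (Eventually.of_forall fun t => e0 t), integral_const_mul,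
    Jval (k + 2) (n + k) (by omega)]
  rw [show n + k - (k + 2) - 2 = n - 4 by omega, show n + k - 1 = n - 1 + k by omega,
    choose_real (show k ≤ n - 1 + k by omega), show n - 1 + k - k = n - 1 by omega]
  have hf1 : ((n - 1).factorial : ℝ)
      = ((n:ℝ) - 1) * (((n:ℝ) - 2) * (((n:ℝ) - 3) * ((n - 4).factorial : ℝ))) := by
    rw [show n - 1 = (n - 4) + 3 by omega]
    push_cast [Nat.factorial_succ]
    have : ((n - 4 : ℕ) : ℝ) = (n:ℝ) - 4 := by
      push_cast [Nat.cast_sub (show 4 ≤ n from hn)]; ring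
    rw [this]; ring
  have hf2 : ((k + 2).factorial : ℝ) = ((k:ℝ) + 2) * (((k:ℝ) + 1) * (k.factorial : ℝ)) := by
    push_cast [Nat.factorial_succ]; ring
  have hf3 : ((n - 1 + k).factorial : ℝ) ≠ 0 := by positivity
  have hf4 : ((n-4).factorial : ℝ) ≠ 0 := by positivity
  have hf5 : (k.factorial : ℝ) ≠ 0 := by positivity
  have h1 : ((n:ℝ) - 1) ≠ 0 := by
    have : (4:ℝ) ≤ (n:ℝ) := by exact_mod_cast hn
    linarith
  have h2 : ((n:ℝ) - 2) ≠ 0 := by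
    have : (4:ℝ) ≤ (n:ℝ) := by exact_mod_cast hn
    linarith
  have h3 : ((n:ℝ) - 3) ≠ 0 := by
    have : (4:ℝ) ≤ (n:ℝ) := by exact_mod_cast hn
    linarith
  rw [hf1, hf2]
  field_simp




lemma hasSum_bask (m : ℕ) (hm : 1 ≤ m) {x : ℝ} (hx : 0 ≤ x) :
    HasSum (fun k => bask m k x) 1 := by
  obtain ⟨j, rfl⟩ : ∃ j, m = j + 1 := ⟨m - 1, by omega⟩
  have h1x : (0:ℝ) < 1 + x := by linarith
  have hr : ‖x / (1 + x)‖ < 1 := by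
    rw [Real.norm_eq_abs, abs_of_nonneg (by positivity), div_lt_one h1x]
    linarith
  have H := (hasSum_choose_mul_geometric_of_norm_lt_one (𝕜 := ℝ) j hr).div_const
    ((1 + x) ^ (j + 1))
  have hval : 1 / (1 - x / (1+x)) ^ (j + 1) / (1 + x) ^ (j + 1) = 1 := by
    rw [show 1 - x / (1+x) = (1+x)⁻¹ by field_simp; ring]
    field_simp
    rw [← mul_pow, one_div_mul_cancel h1x.ne', one_pow]
  rw [hval] at H
  apply H.congr_fun
  intro k
  unfold bask
  rw [show j + 1 + k - 1 = k + j by omega,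
    show (k + j).choose k = (k + j).choose j by
      rw [← Nat.choose_symm (by omega), show k + j - k = j by omega]]
  conv_rhs => rw [div_pow, mul_div_assoc', div_div, ← pow_add,
    show k + (j + 1) = j + 1 + k by omega]

/-- shift identity -/
lemma bask_shift (m : ℕ) (hm : 1 ≤ m) (k : ℕ) {x : ℝ} (hx : 0 ≤ x) :
    ((k:ℝ) + 1) * bask m (k + 1) x = (m:ℝ) * x * bask (m + 1) k x := by
  have h1x : (0:ℝ) < 1 + x := by linarith
  unfold bask
  rw [show m + (k + 1) - 1 = m + k by omega, show m + 1 + k - 1 = m + k by omega]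
  have hc1 : ((m + k).choose (k+1) : ℝ)
      = ((m+k).factorial : ℝ) / ((k+1).factorial * (m-1).factorial) := by
    rw [choose_real (by omega), show m + k - (k+1) = m - 1 by omega]
  have hc2 : ((m + k).choose k : ℝ)
      = ((m+k).factorial : ℝ) / (k.factorial * m.factorial) := by
    rw [choose_real (by omega), show m + k - k = m by omega]
  have hm1 : (m.factorial : ℝ) = (m:ℝ) * ((m-1).factorial : ℝ) := by
    rw [show m = (m-1) + 1 by omega, Nat.factorial_succ]
    push_cast [show m - 1 + 1 = m by omega]
    ring
  have hk1 : ((k+1).factorial : ℝ) = ((k:ℝ) + 1) * (k.factorial : ℝ) := by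
    push_cast [Nat.factorial_succ]; ring
  rw [hc1, hc2, hm1, hk1, show m + (k+1) = (m + 1) + k by omega]
  have hfk : (k.factorial : ℝ) ≠ 0 := by positivity
  have hfm : (((m-1).factorial : ℕ) : ℝ) ≠ 0 := by positivity
  have hfmk : (((m+k).factorial : ℕ) : ℝ) ≠ 0 := by positivity
  field_simp
  ring

lemma bask_shift2 (m : ℕ) (hm : 1 ≤ m) (k : ℕ) {x : ℝ} (hx : 0 ≤ x) :
    ((k:ℝ) + 1) * ((k:ℝ) + 2) * bask m (k + 2) x
      = (m:ℝ) * ((m:ℝ) + 1) * x ^ 2 * bask (m + 2) k x := by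
  have h1 := bask_shift m hm (k + 1) hx
  have h2 := bask_shift (m + 1) (by omega) k hx
  rw [show k + 1 + 1 = k + 2 from rfl] at h1
  rw [show m + 1 + 1 = m + 2 from rfl] at h2
  push_cast at h1 h2 ⊢
  linear_combination ((k:ℝ) + 1) * h1 + (m:ℝ) * x * h2

lemma hasSum_k (m : ℕ) (hm : 1 ≤ m) {x : ℝ} (hx : 0 ≤ x) :
    HasSum (fun k : ℕ => (k:ℝ) * bask m k x) ((m:ℝ) * x) := by
  have H : HasSum (fun k : ℕ => (fun k : ℕ => (k:ℝ) * bask m k x) (k + 1)) ((m:ℝ) * x) := by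
    have H0 := (hasSum_bask (m + 1) (by omega) hx).mul_left ((m:ℝ) * x)
    rw [mul_one] at H0
    apply HasSum.congr_fun H0
    intro k
    push_cast
    exact bask_shift m hm k hx
  have := (hasSum_nat_add_iff (f := fun k : ℕ => (k:ℝ) * bask m k x) 1).mp H
  simpa using this

lemma hasSum_kk (m : ℕ) (hm : 1 ≤ m) {x : ℝ} (hx : 0 ≤ x) :
    HasSum (fun k : ℕ => (k:ℝ) * ((k:ℝ) - 1) * bask m k x) ((m:ℝ) * ((m:ℝ) + 1) * x ^ 2) := by
  have H : HasSum (fun k : ℕ => (fun k : ℕ => (k:ℝ) * ((k:ℝ) - 1) * bask m k x) (k + 2))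
      ((m:ℝ) * ((m:ℝ) + 1) * x ^ 2) := by
    have H0 := (hasSum_bask (m + 2) (by omega) hx).mul_left ((m:ℝ) * ((m:ℝ) + 1) * x ^ 2)
    rw [mul_one] at H0
    apply HasSum.congr_fun H0
    intro k
    push_cast
    rw [← bask_shift2 m hm k hx]
    ring
  have := (hasSum_nat_add_iff (f := fun k : ℕ => (k:ℝ) * ((k:ℝ) - 1) * bask m k x) 2).mp H
  norm_num [Finset.sum_range_succ] at this
  exact this

lemma hasSum_quad (m : ℕ) (hm : 1 ≤ m) {x : ℝ} (hx : 0 ≤ x) (c1 c2 : ℝ) :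
    HasSum (fun k : ℕ => ((k:ℝ) + c1) * ((k:ℝ) + c2) * bask m k x)
      ((m:ℝ) * ((m:ℝ) + 1) * x ^ 2 + (1 + c1 + c2) * ((m:ℝ) * x) + c1 * c2) := by
  have H := ((hasSum_kk m hm hx).add ((hasSum_k m hm hx).mul_left (1 + c1 + c2))).add
    ((hasSum_bask m hm hx).mul_left (c1 * c2))
  apply HasSum.congr_fun (by simpa using H)
  intro k
  ring

lemma hasSum_quad_shift (m : ℕ) (hm : 1 ≤ m) {x : ℝ} (hx : 0 ≤ x) :
    HasSum (fun k : ℕ => ((k:ℝ) + 1) * ((k:ℝ) + 2)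
        * (if k = 0 then 0 else bask m (k - 1) x))
      ((m:ℝ) * ((m:ℝ) + 1) * x ^ 2 + 6 * ((m:ℝ) * x) + 6) := by
  set F := fun k : ℕ => ((k:ℝ) + 1) * ((k:ℝ) + 2)
      * (if k = 0 then 0 else bask m (k - 1) x) with hF
  have H : HasSum (fun k : ℕ => F (k + 1))
      ((m:ℝ) * ((m:ℝ) + 1) * x ^ 2 + 6 * ((m:ℝ) * x) + 6) := by
    have H0 := hasSum_quad m hm hx 2 3
    have e : (1 + 2 + 3 : ℝ) = 6 := by norm_num
    have e2 : (2 * 3 : ℝ) = 6 := by norm_num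
    rw [e, e2] at H0
    apply HasSum.congr_fun H0
    intro k
    simp only [hF, Nat.add_sub_cancel, Nat.succ_ne_zero, if_false]
    push_cast
    ring
  have := (hasSum_nat_add_iff (f := F) 1).mp H
  have hF0 : F 0 = 0 := by simp [hF]
  rw [Finset.sum_range_one, hF0, add_zero] at this
  exact this

end Aux

theorem V1_moment_e2 (n : ℕ) (hn : 4 ≤ n) (x : ℝ) (hx : 0 ≤ x) (a0 a1 : ℕ → ℝ) :
    (∀ k : ℕ, IntegrableOn (fun t : ℝ => bask n k t * t ^ 2) (Set.Ioi 0)) ∧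
    Summable (fun k : ℕ =>
      |p1 a0 a1 n k x * ∫ t in Set.Ioi (0 : ℝ), bask n k t * t ^ 2|) ∧
    V1 a0 a1 n (fun t => t ^ 2) x =
      (2 * a0 n - a1 n) * x ^ 2 + (1 / (((n : ℝ) - 2) * ((n : ℝ) - 3))) *
        (a0 n * (8 + 10 * x - 8 * x ^ 2) + a1 n * (-6 - 10 * x + 2 * x ^ 2)
          + (n : ℝ) * (a0 n * (10 * x + 16 * x ^ 2) - a1 n * (6 * x + 10 * x ^ 2))) := by
  have hn4 : (4:ℝ) ≤ (n:ℝ) := by exact_mod_cast hn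
  have h1 : ((n:ℝ) - 1) ≠ 0 := by linarith
  have h2 : ((n:ℝ) - 2) ≠ 0 := by linarith
  have h3 : ((n:ℝ) - 3) ≠ 0 := by linarith
  set c : ℝ := ((n:ℝ) - 1) * (((n:ℝ) - 2) * ((n:ℝ) - 3)) with hc
  have hcne : c ≠ 0 := by simp [hc, h1, h2, h3]
  set A : ℝ := a0 n + a1 n * x with hA
  set B : ℝ := a0 n - a1 n * (1 + x) with hB
  have hs1 := (hasSum_quad (n+1) (by omega) hx 1 2).mul_left (A / c)
  have hs2 := (hasSum_quad_shift (n+1) (by omega) hx).mul_left (B / c)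
  have Htot : HasSum
      (fun k : ℕ => p1 a0 a1 n k x * ∫ t in Set.Ioi (0 : ℝ), bask n k t * t ^ 2)
      (A / c * (((n:ℝ)+1) * (((n:ℝ)+1) + 1) * x ^ 2 + (1 + 1 + 2) * (((n:ℝ)+1) * x) + 1 * 2)
        + B / c * (((n:ℝ)+1) * (((n:ℝ)+1) + 1) * x ^ 2 + 6 * (((n:ℝ)+1) * x) + 6)) := by
    have H := hs1.add hs2
    push_cast at H
    apply HasSum.congr_fun (by push_cast; exact H)
    intro k
    rw [integral_bask_sq n k hn]
    unfold p1
    rw [← hA, ← hB, ← hc]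
    ring
  refine ⟨fun k => integrable_bask_sq n k hn, summable_abs_iff.mpr Htot.summable, ?_⟩
  unfold V1
  rw [Htot.tsum_eq, hA, hB, hc]
  field_simp
  ring
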